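/- For a natural number k, write k + 1 = 2^κ(2ρ - 1) with ρ ≥ 1. Then the following are equivalent: (a) for all pairs (s,t) with s < t, either k < 2^{s+t} or the s-th binary digit of k is 1; (b) ρ ≤ 2^κ. -/

import Mathlib

/-- If `k + 1 = 2^s * c` with `c ≥ 1`, then `k / 2^s = c - 1`. -/
lemma aux_div (k s c : ℕ) (hc : 1 ≤ c) (hk : k + 1 = 2^s * c) : k / 2^s = c - 1 := by
  obtain ⟨d, rfl⟩ : ∃ d, c = d + 1 := ⟨c - 1, by omega⟩
  have h2 : 0 < 2^s := Nat.two_pow_pos s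
  have hk' : k = 2^s * d + (2^s - 1) := by
    have : 2^s * (d + 1) = 2^s * d + 2^s := by ring
    omega
  rw [hk', Nat.mul_add_div h2, Nat.div_eq_of_lt (by omega)]
  omega

/-- D-annihilation criterion. With k+1 = 2^κ(2ρ-1), ρ ≥ 1:
(∀ s < t, k < 2^{s+t} or bit s of k is 1) iff ρ ≤ 2^κ. -/
theorem stmt4 (k κ ρ : ℕ) (hρ : 1 ≤ ρ) (hk : k + 1 = 2^κ * (2 * ρ - 1)) :
    (∀ s t : ℕ, s < t → (k < 2^(s+t) ∨ k.testBit s = true)) ↔ ρ ≤ 2^κ := by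
  obtain ⟨q, rfl⟩ : ∃ q, ρ = q + 1 := ⟨ρ - 1, by omega⟩
  have hk1 : k + 1 = 2^κ * (2 * q + 1) := by
    have : 2 * (q + 1) - 1 = 2 * q + 1 := by omega
    rwa [this] at hk
  -- bit κ of k is false
  have hbitκ : k.testBit κ = false := by
    rw [Nat.testBit_eq_decide_div_mod_eq, aux_div k κ (2 * q + 1) (by omega) hk1]
    simp [Nat.mul_mod_right]
  -- bit s of k is true for s < κ
  have hbitlt : ∀ s, s < κ → k.testBit s = true := by
    intro s hs
    have hk2 : k + 1 = 2^s * (2 * (2^(κ - s - 1) * (2 * q + 1))) := by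
      rw [hk1]
      have : 2^κ = 2^s * (2 * 2^(κ - s - 1)) := by
        rw [← pow_succ']
        rw [← pow_add]
        congr 1
        omega
      rw [this]; ring
    have hpos : 1 ≤ 2^(κ - s - 1) * (2 * q + 1) :=
      Nat.one_le_iff_ne_zero.mpr (by positivity)
    rw [Nat.testBit_eq_decide_div_mod_eq, aux_div k s _ (by omega) hk2]
    simp
    omega
  constructor
  · intro h
    rcases h κ (κ + 1) (by omega) with hlt | hbit
    · have h1 : 2^κ * (2 * q + 1) ≤ 2^κ * 2^(κ + 1) := by
        have : 2^(κ + (κ + 1)) = 2^κ * 2^(κ + 1) := by rw [pow_add]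
        omega
      have h2 : 2 * q + 1 ≤ 2^(κ + 1) := Nat.le_of_mul_le_mul_left h1 (Nat.two_pow_pos κ)
      have : 2^(κ + 1) = 2 * 2^κ := by rw [pow_succ]; ring
      omega
    · rw [hbitκ] at hbit; exact absurd hbit (by simp)
  · intro hle s t hst
    rcases lt_or_ge s κ with hs | hs
    · exact Or.inr (hbitlt s hs)
    · left
      have h1 : 2 * q + 1 ≤ 2^(κ + 1) := by
        have : 2^(κ + 1) = 2 * 2^κ := by rw [pow_succ]; ring
        omega
      have h2 : k + 1 ≤ 2^κ * 2^(κ + 1) := by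
        rw [hk1]
        exact Nat.mul_le_mul_left _ h1
      have h3 : 2^(κ + (κ + 1)) = 2^κ * 2^(κ + 1) := pow_add 2 κ (κ + 1)
      have h4 : 2^(κ + (κ + 1)) ≤ 2^(s + t) :=
        Nat.pow_le_pow_right (by norm_num) (by omega)
      omega
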